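/- Fix μ ∈ ℝ, σ > 0 and k > 0, and let h(x) = (1 + ((x−μ)/σ)²) e^{−k|(x−μ)/σ|} (proportional to the symmetric BUL(μ,σ,k) density). If 0 < k < 1, the set of local maximum points of h is exactly {μ, μ + σ(1/k + √(1/k² − 1)), μ − σ(1/k + √(1/k² − 1))}, so the density is trimodal with outer modes μ ± σ(1/k + √(1/k² − 1)); if k ≥ 1, the unique local maximum point of h is μ. -/

import Mathlib

open MeasureTheory Real Set

noncomputable def gBUL (k : ℝ) : ℝ → ℝ := fun t => (1 + t ^ 2) * Real.exp (-(k * t))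

lemma gBUL_hasDerivAt (k t : ℝ) :
    HasDerivAt (gBUL k) (Real.exp (-(k * t)) * (2 * t - k * (1 + t ^ 2))) t := by
  have h1 : HasDerivAt (fun t : ℝ => 1 + t ^ 2) (2 * t) t := by
    simpa using (hasDerivAt_pow 2 t).const_add 1
  have h0 : HasDerivAt (fun t : ℝ => -(k * t)) (-k) t := by
    have := ((hasDerivAt_id t).const_mul k).neg; simp only [id, mul_one] at this; exact this
  have h2 := h0.exp
  have : HasDerivAt (gBUL k) (2 * t * rexp (-(k * t)) + (1 + t ^ 2) * (rexp (-(k * t)) * -k)) t := h1.mul h2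
  convert this using 1
  ring

lemma gBUL_cont (k : ℝ) : Continuous (gBUL k) := by
  unfold gBUL; fun_prop

lemma gBUL_deriv (k t : ℝ) :
    deriv (gBUL k) t = Real.exp (-(k * t)) * (2 * t - k * (1 + t ^ 2)) :=
  (gBUL_hasDerivAt k t).deriv

lemma gBUL_anti1 (k s : ℝ) (hk : 0 < k) (hs2 : s ^ 2 = 1 / k ^ 2 - 1) (hs0 : 0 ≤ s) :
    StrictAntiOn (gBUL k) (Icc 0 (1 / k - s)) := by
  apply strictAntiOn_of_deriv_neg (convex_Icc _ _) (gBUL_cont k).continuousOn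
  intro t ht
  rw [interior_Icc] at ht
  rw [gBUL_deriv]
  have he : 0 < Real.exp (-(k * t)) := Real.exp_pos _
  have h1 : 0 < 1 - k * t - k * s := by
    have := ht.2
    have : k * t < k * (1 / k - s) := by nlinarith
    have hk' : k * (1 / k) = 1 := by field_simp
    nlinarith
  have h2 : 0 < 1 - k * t + k * s := by nlinarith [ht.1, mul_pos hk ht.1, mul_nonneg hk.le hs0]
  have hP : 2 * t - k * (1 + t ^ 2) < 0 := by
    have hkk : k * (1 / k) = 1 := by field_simp
    have hss : k ^ 2 * s ^ 2 = 1 - k ^ 2 := by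
      field_simp at hs2 ⊢
      nlinarith [hs2]
    nlinarith [mul_pos h1 h2]
  nlinarith

lemma gBUL_mono (k s : ℝ) (hk : 0 < k) (hs2 : s ^ 2 = 1 / k ^ 2 - 1) (hs0 : 0 ≤ s) :
    StrictMonoOn (gBUL k) (Icc (1 / k - s) (1 / k + s)) := by
  apply strictMonoOn_of_deriv_pos (convex_Icc _ _) (gBUL_cont k).continuousOn
  intro t ht
  rw [interior_Icc] at ht
  rw [gBUL_deriv]
  have he : 0 < Real.exp (-(k * t)) := Real.exp_pos _
  have hkk : k * (1 / k) = 1 := by field_simp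
  have h1 : 0 < k * s - (1 - k * t) := by nlinarith [ht.1]
  have h2 : 0 < k * s + (1 - k * t) := by nlinarith [ht.2]
  have hss : k ^ 2 * s ^ 2 = 1 - k ^ 2 := by
    field_simp at hs2 ⊢
    nlinarith [hs2]
  have hP : 0 < 2 * t - k * (1 + t ^ 2) := by nlinarith [mul_pos h1 h2]
  positivity

lemma gBUL_anti2 (k s : ℝ) (hk : 0 < k) (hs2 : s ^ 2 = 1 / k ^ 2 - 1) (hs0 : 0 ≤ s) :
    StrictAntiOn (gBUL k) (Ici (1 / k + s)) := by
  apply strictAntiOn_of_deriv_neg (convex_Ici _) (gBUL_cont k).continuousOn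
  intro t ht
  rw [interior_Ici] at ht
  rw [gBUL_deriv]
  have he : 0 < Real.exp (-(k * t)) := Real.exp_pos _
  have hkk : k * (1 / k) = 1 := by field_simp
  have h1 : 0 < (k * t - 1) - k * s := by
    have : k * (1 / k + s) < k * t := by nlinarith [Set.mem_Ioi.mp ht]
    nlinarith
  have h2 : 0 < (k * t - 1) + k * s := by nlinarith [mul_nonneg hk.le hs0]
  have hss : k ^ 2 * s ^ 2 = 1 - k ^ 2 := by
    field_simp at hs2 ⊢
    nlinarith [hs2]
  have hP : 2 * t - k * (1 + t ^ 2) < 0 := by nlinarith [mul_pos h1 h2]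
  nlinarith

lemma gBUL_antiGe (k : ℝ) (hk1 : 1 ≤ k) : StrictAntiOn (gBUL k) (Ici (0 : ℝ)) := by
  have hk : 0 < k := lt_of_lt_of_le one_pos hk1
  have hneg : ∀ t : ℝ, k * t ≠ 1 → deriv (gBUL k) t < 0 := by
    intro t ht
    rw [gBUL_deriv]
    have he : 0 < Real.exp (-(k * t)) := Real.exp_pos _
    have h1 : 0 < (k * t - 1) ^ 2 := by
      have : k * t - 1 ≠ 0 := sub_ne_zero.mpr ht
      positivity
    have hP : 2 * t - k * (1 + t ^ 2) < 0 := by nlinarith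
    nlinarith
  have hA : StrictAntiOn (gBUL k) (Icc 0 (1 / k)) := by
    apply strictAntiOn_of_deriv_neg (convex_Icc _ _) (gBUL_cont k).continuousOn
    intro t ht
    rw [interior_Icc] at ht
    apply hneg
    have : k * t < k * (1 / k) := by nlinarith [ht.2]
    have hkk : k * (1 / k) = 1 := by field_simp
    nlinarith
  have hB : StrictAntiOn (gBUL k) (Ici (1 / k)) := by
    apply strictAntiOn_of_deriv_neg (convex_Ici _) (gBUL_cont k).continuousOn
    intro t ht
    rw [interior_Ici] at ht
    apply hneg
    have : k * (1 / k) < k * t := by nlinarith [Set.mem_Ioi.mp ht]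
    have hkk : k * (1 / k) = 1 := by field_simp
    nlinarith
  intro a ha b hb hab
  have hik : 0 < 1 / k := by positivity
  rcases le_total b (1 / k) with hcb | hcb
  · exact hA ⟨ha, hab.le.trans hcb⟩ ⟨hb, hcb⟩ hab
  · rcases le_or_gt (1 / k) a with hca | hca
    · exact hB hca hcb hab
    · have h1 : gBUL k (1 / k) < gBUL k a := hA ⟨ha, hca.le⟩ ⟨hik.le, le_refl _⟩ hca
      have h2 : gBUL k b ≤ gBUL k (1 / k) := by
        rcases eq_or_lt_of_le hcb with h | h
        · rw [← h]
        · exact (hB (Set.mem_Ici.mpr le_rfl) hcb h).le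
      linarith
theorem stmt_19 (μ σ k : ℝ) (hσ : 0 < σ) (hk : 0 < k) :
    let h : ℝ → ℝ := fun x =>
      (1 + ((x - μ) / σ) ^ 2) * Real.exp (-(k * |(x - μ) / σ|))
    (k < 1 →
        {m : ℝ | IsLocalMax h m} =
          {μ, μ + σ * (1 / k + Real.sqrt (1 / k ^ 2 - 1)),
            μ - σ * (1 / k + Real.sqrt (1 / k ^ 2 - 1))}) ∧
      (1 ≤ k → {m : ℝ | IsLocalMax h m} = {μ}) := by
  intro h
  have hσ0 : σ ≠ 0 := ne_of_gt hσ
  have hgh : ∀ x, h x = gBUL k |(x - μ) / σ| := by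
    intro x
    simp only [h, gBUL, sq_abs]
  have hsym : ∀ x, h (2 * μ - x) = h x := by
    intro x
    rw [hgh, hgh]
    have e : (2 * μ - x - μ) / σ = -((x - μ) / σ) := by ring
    rw [e, abs_neg]
  have hmax_refl : ∀ m, IsLocalMax h m → IsLocalMax h (2 * μ - m) := by
    intro m hm
    have hc : Filter.Tendsto (fun x : ℝ => 2 * μ - x) (nhds (2 * μ - m)) (nhds m) := by
      have hcont : Continuous fun x : ℝ => 2 * μ - x := by continuity
      have := hcont.tendsto (2 * μ - m)
      simpa using this
    have hev : ∀ᶠ x in nhds (2 * μ - m), h (2 * μ - x) ≤ h m := hc.eventually hm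
    have hmm : h m = h (2 * μ - m) := by
      have := hsym (2 * μ - m)
      simpa using this
    filter_upwards [hev] with x hx
    rw [hsym x] at hx
    rw [← hmm]
    exact hx
  constructor
  · -- case k < 1
    intro hk1
    obtain ⟨s, hs_def⟩ : ∃ a, a = Real.sqrt (1 / k ^ 2 - 1) := ⟨_, rfl⟩
    have hk2 : (0:ℝ) < k ^ 2 := by positivity
    have hge : 1 ≤ 1 / k ^ 2 := by
      rw [le_div_iff₀ hk2]; nlinarith
    have hgt : 1 < 1 / k ^ 2 := by
      rw [lt_div_iff₀ hk2]; nlinarith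
    have hs2 : s ^ 2 = 1 / k ^ 2 - 1 := by
      rw [hs_def]; exact Real.sq_sqrt (by linarith)
    have hspos : 0 < s := by
      rw [hs_def]; exact Real.sqrt_pos.mpr (by linarith)
    have hs_lt : s < 1 / k := by
      have h1 : s < Real.sqrt (1 / k ^ 2) := by
        rw [hs_def]; exact Real.sqrt_lt_sqrt (by linarith) (by linarith)
      have h2 : Real.sqrt (1 / k ^ 2) = 1 / k := by
        rw [show (1:ℝ) / k ^ 2 = (1 / k) ^ 2 by ring]
        exact Real.sqrt_sq (by positivity)
      linarith [h2 ▸ h1]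
    obtain ⟨t1, ht1_def⟩ : ∃ a, a = 1 / k - s := ⟨_, rfl⟩
    obtain ⟨t2, ht2_def⟩ : ∃ a, a = 1 / k + s := ⟨_, rfl⟩
    have ht1pos : 0 < t1 := by rw [ht1_def]; linarith
    have ht12 : t1 < t2 := by rw [ht1_def, ht2_def]; linarith
    have ht2pos : 0 < t2 := lt_trans ht1pos ht12
    rw [← hs_def, ← ht2_def]
    have hA := gBUL_anti1 k s hk hs2 hspos.le
    have hM := gBUL_mono k s hk hs2 hspos.le
    have hB := gBUL_anti2 k s hk hs2 hspos.le
    rw [← ht1_def] at hA hM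
    rw [← ht2_def] at hM hB
    have key : ∀ m, IsLocalMax h m → 0 < (m - μ) / σ → (m - μ) / σ = t2 := by
      intro m hm hu
      obtain ⟨u, hu_def⟩ : ∃ a, a = (m - μ) / σ := ⟨_, rfl⟩
      rw [← hu_def] at hu ⊢
      have hm' : ∀ᶠ x in nhds m, h x ≤ h m := hm
      rcases Metric.eventually_nhds_iff.mp hm' with ⟨ε, hε, hb⟩
      have hgm : h m = gBUL k u := by rw [hgh, ← hu_def, abs_of_pos hu]
      rcases lt_or_ge u t1 with hcase | hcase
      · -- 0 < u < t1 : a point slightly to the left is bigger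
        exfalso
        obtain ⟨δ, hδ_def⟩ : ∃ a, a = min (ε / 2) (σ * u / 2) := ⟨_, rfl⟩
        have hδpos : 0 < δ := by rw [hδ_def]; exact lt_min (by linarith) (by positivity)
        have hδε : δ < ε := by rw [hδ_def]; exact lt_of_le_of_lt (min_le_left _ _) (by linarith)
        have hδσ : δ / σ ≤ u / 2 := by
          have hle : δ ≤ σ * u / 2 := by rw [hδ_def]; exact min_le_right _ _
          rw [div_le_iff₀ hσ]
          calc δ ≤ σ * u / 2 := hle
            _ = u / 2 * σ := by ring
        have hdist : dist (m - δ) m < ε := by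
          rw [Real.dist_eq]
          rw [show m - δ - m = -δ by ring, abs_neg, abs_of_pos hδpos]
          exact hδε
        have hux : (m - δ - μ) / σ = u - δ / σ := by rw [hu_def]; ring
        have hδσ0 : 0 < δ / σ := div_pos hδpos hσ
        have h1 : 0 < u - δ / σ := by linarith
        have hgx : h (m - δ) = gBUL k (u - δ / σ) := by rw [hgh, hux, abs_of_pos h1]
        have hmem1 : u - δ / σ ∈ Icc (0:ℝ) t1 := ⟨by linarith, by linarith⟩
        have hmem2 : u ∈ Icc (0:ℝ) t1 := ⟨hu.le, hcase.le⟩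
        have hlt := hA hmem1 hmem2 (by linarith)
        have hle := hb hdist
        rw [hgx, hgm] at hle
        linarith
      · rcases lt_trichotomy u t2 with hcase2 | hcase2 | hcase2
        · -- t1 ≤ u < t2 : a point slightly to the right is bigger
          exfalso
          obtain ⟨δ, hδ_def⟩ : ∃ a, a = min (ε / 2) (σ * (t2 - u)) := ⟨_, rfl⟩
          have hδpos : 0 < δ := by rw [hδ_def]; exact lt_min (by linarith) (by nlinarith)
          have hδε : δ < ε := by rw [hδ_def]; exact lt_of_le_of_lt (min_le_left _ _) (by linarith)
          have hδσ : δ / σ ≤ t2 - u := by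
            have hle : δ ≤ σ * (t2 - u) := by rw [hδ_def]; exact min_le_right _ _
            rw [div_le_iff₀ hσ]
            calc δ ≤ σ * (t2 - u) := hle
              _ = (t2 - u) * σ := by ring
          have hdist : dist (m + δ) m < ε := by
            rw [Real.dist_eq]
            rw [show m + δ - m = δ by ring, abs_of_pos hδpos]
            exact hδε
          have hux : (m + δ - μ) / σ = u + δ / σ := by rw [hu_def]; ring
          have hδσ0 : 0 < δ / σ := div_pos hδpos hσ
          have h1 : 0 < u + δ / σ := by linarith
          have hgx : h (m + δ) = gBUL k (u + δ / σ) := by rw [hgh, hux, abs_of_pos h1]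
          have hmem1 : u ∈ Icc t1 t2 := ⟨hcase, hcase2.le⟩
          have hmem2 : u + δ / σ ∈ Icc t1 t2 := ⟨by linarith, by linarith⟩
          have hlt := hM hmem1 hmem2 (by linarith)
          have hle := hb hdist
          rw [hgx, hgm] at hle
          linarith
        · exact hcase2
        · -- t2 < u : a point slightly to the left is bigger
          exfalso
          obtain ⟨δ, hδ_def⟩ : ∃ a, a = min (ε / 2) (σ * (u - t2)) := ⟨_, rfl⟩
          have hδpos : 0 < δ := by rw [hδ_def]; exact lt_min (by linarith) (by nlinarith)
          have hδε : δ < ε := by rw [hδ_def]; exact lt_of_le_of_lt (min_le_left _ _) (by linarith)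
          have hδσ : δ / σ ≤ u - t2 := by
            have hle : δ ≤ σ * (u - t2) := by rw [hδ_def]; exact min_le_right _ _
            rw [div_le_iff₀ hσ]
            calc δ ≤ σ * (u - t2) := hle
              _ = (u - t2) * σ := by ring
          have hdist : dist (m - δ) m < ε := by
            rw [Real.dist_eq]
            rw [show m - δ - m = -δ by ring, abs_neg, abs_of_pos hδpos]
            exact hδε
          have hux : (m - δ - μ) / σ = u - δ / σ := by rw [hu_def]; ring
          have hδσ0 : 0 < δ / σ := div_pos hδpos hσ
          have h1 : 0 < u - δ / σ := by linarith
          have hgx : h (m - δ) = gBUL k (u - δ / σ) := by rw [hgh, hux, abs_of_pos h1]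
          have hmem1 : u - δ / σ ∈ Ici t2 := Set.mem_Ici.mpr (by linarith)
          have hmem2 : u ∈ Ici t2 := Set.mem_Ici.mpr (by linarith)
          have hlt := hB hmem1 hmem2 (by linarith)
          have hle := hb hdist
          rw [hgx, hgm] at hle
          linarith
    ext m
    simp only [Set.mem_setOf_eq, Set.mem_insert_iff, Set.mem_singleton_iff]
    constructor
    · intro hm
      rcases lt_trichotomy ((m - μ) / σ) 0 with hu | hu | hu
      · right; right
        have hm2 := hmax_refl m hm
        have e : (2 * μ - m - μ) / σ = -((m - μ) / σ) := by ring
        have := key (2 * μ - m) hm2 (by rw [e]; linarith)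
        rw [e] at this
        have : (m - μ) / σ = -t2 := by linarith
        rw [div_eq_iff hσ0] at this
        linarith
      · left
        rw [div_eq_zero_iff] at hu
        rcases hu with hu | hu
        · linarith
        · exact absurd hu hσ0
      · right; left
        have := key m hm hu
        rw [div_eq_iff hσ0] at this
        linarith
    · intro hm
      have hIsMax : ∀ (m : ℝ) (r : ℝ), 0 < r → (∀ x, dist x m < r → h x ≤ h m) → IsLocalMax h m := by
        intro m r hr hball
        have : ∀ᶠ x in nhds m, h x ≤ h m := Metric.eventually_nhds_iff.mpr ⟨r, hr, fun x hx => hball x hx⟩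
        exact this
      rcases hm with hmeq | hmeq | hmeq <;> rw [hmeq]
      · -- μ is a local max
        apply hIsMax μ (σ * t1) (by positivity)
        intro x hx
        rw [Real.dist_eq] at hx
        have hv : |(x - μ) / σ| < t1 := by
          rw [abs_div, abs_of_pos hσ, div_lt_iff₀ hσ]
          calc |x - μ| < σ * t1 := hx
            _ = t1 * σ := by ring
        rw [hgh, hgh]
        rw [show (μ - μ) / σ = 0 by ring, abs_zero]
        rcases eq_or_lt_of_le (abs_nonneg ((x - μ) / σ)) with h0 | h0
        · rw [← h0]
        · have hmem1 : (0:ℝ) ∈ Icc (0:ℝ) t1 := ⟨le_refl _, ht1pos.le⟩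
          have hmem2 : |(x - μ) / σ| ∈ Icc (0:ℝ) t1 := ⟨abs_nonneg _, hv.le⟩
          exact (hA hmem1 hmem2 h0).le
      · -- μ + σ * t2
        apply hIsMax _ (σ * (t2 - t1)) (by nlinarith)
        intro x hx
        rw [Real.dist_eq] at hx
        obtain ⟨v, hv_def⟩ : ∃ a, a = |(x - μ) / σ| := ⟨_, rfl⟩
        have hwt : (x - μ) / σ - t2 = (x - (μ + σ * t2)) / σ := by field_simp; ring
        have hvt : |v - t2| < t2 - t1 := by
          have h1 : |v - t2| ≤ |(x - μ) / σ - t2| := by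
            have h1' := abs_abs_sub_abs_le_abs_sub ((x - μ) / σ) t2
            rw [abs_of_pos ht2pos] at h1'
            rw [hv_def]
            exact h1'
          have h2 : |(x - μ) / σ - t2| < t2 - t1 := by
            rw [hwt, abs_div, abs_of_pos hσ, div_lt_iff₀ hσ]
            calc |x - (μ + σ * t2)| < σ * (t2 - t1) := hx
              _ = (t2 - t1) * σ := by ring
          linarith
        rw [abs_lt] at hvt
        have hgm2 : h (μ + σ * t2) = gBUL k t2 := by
          rw [hgh, show (μ + σ * t2 - μ) / σ = t2 by rw [show μ + σ * t2 - μ = σ * t2 by ring, mul_div_cancel_left₀ t2 hσ0], abs_of_pos ht2pos]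
        rw [hgh, ← hv_def, hgm2]
        rcases le_total v t2 with hc | hc
        · rcases eq_or_lt_of_le hc with h0 | h0
          · rw [h0]
          · exact (hM ⟨by linarith, hc⟩ ⟨ht12.le, le_refl _⟩ h0).le
        · rcases eq_or_lt_of_le hc with h0 | h0
          · rw [← h0]
          · exact (hB (Set.mem_Ici.mpr (le_refl _)) (Set.mem_Ici.mpr (by linarith)) h0).le
      · -- μ - σ * t2
        apply hIsMax _ (σ * (t2 - t1)) (by nlinarith)
        intro x hx
        rw [Real.dist_eq] at hx
        obtain ⟨v, hv_def⟩ : ∃ a, a = |(x - μ) / σ| := ⟨_, rfl⟩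
        have hwt : (x - μ) / σ - (-t2) = (x - (μ - σ * t2)) / σ := by field_simp; ring
        have hvt : |v - t2| < t2 - t1 := by
          have h1 : |v - t2| ≤ |(x - μ) / σ - (-t2)| := by
            have h1' := abs_abs_sub_abs_le_abs_sub ((x - μ) / σ) (-t2)
            rw [abs_neg, abs_of_pos ht2pos] at h1'
            rw [hv_def]
            exact h1'
          have h2 : |(x - μ) / σ - (-t2)| < t2 - t1 := by
            rw [hwt, abs_div, abs_of_pos hσ, div_lt_iff₀ hσ]
            calc |x - (μ - σ * t2)| < σ * (t2 - t1) := hx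
              _ = (t2 - t1) * σ := by ring
          linarith
        rw [abs_lt] at hvt
        have hgm2 : h (μ - σ * t2) = gBUL k t2 := by
          rw [hgh, show (μ - σ * t2 - μ) / σ = -t2 by rw [show μ - σ * t2 - μ = σ * -t2 by ring, mul_div_cancel_left₀ (-t2) hσ0], abs_neg, abs_of_pos ht2pos]
        rw [hgh, ← hv_def, hgm2]
        rcases le_total v t2 with hc | hc
        · rcases eq_or_lt_of_le hc with h0 | h0
          · rw [h0]
          · exact (hM ⟨by linarith, hc⟩ ⟨ht12.le, le_refl _⟩ h0).le
        · rcases eq_or_lt_of_le hc with h0 | h0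
          · rw [← h0]
          · exact (hB (Set.mem_Ici.mpr (le_refl _)) (Set.mem_Ici.mpr (by linarith)) h0).le
  · -- case 1 ≤ k
    intro hk1
    have hA := gBUL_antiGe k hk1
    have key2 : ∀ m, IsLocalMax h m → ¬(0 < (m - μ) / σ) := by
      intro m hm hu
      obtain ⟨u, hu_def⟩ : ∃ a, a = (m - μ) / σ := ⟨_, rfl⟩
      rw [← hu_def] at hu
      have hm' : ∀ᶠ x in nhds m, h x ≤ h m := hm
      rcases Metric.eventually_nhds_iff.mp hm' with ⟨ε, hε, hb⟩
      have hgm : h m = gBUL k u := by rw [hgh, ← hu_def, abs_of_pos hu]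
      obtain ⟨δ, hδ_def⟩ : ∃ a, a = min (ε / 2) (σ * u / 2) := ⟨_, rfl⟩
      have hδpos : 0 < δ := by rw [hδ_def]; exact lt_min (by linarith) (by positivity)
      have hδε : δ < ε := by rw [hδ_def]; exact lt_of_le_of_lt (min_le_left _ _) (by linarith)
      have hδσ : δ / σ ≤ u / 2 := by
        have hle : δ ≤ σ * u / 2 := by rw [hδ_def]; exact min_le_right _ _
        rw [div_le_iff₀ hσ]
        calc δ ≤ σ * u / 2 := hle
          _ = u / 2 * σ := by ring
      have hdist : dist (m - δ) m < ε := by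
        rw [Real.dist_eq]
        rw [show m - δ - m = -δ by ring, abs_neg, abs_of_pos hδpos]
        exact hδε
      have hux : (m - δ - μ) / σ = u - δ / σ := by rw [hu_def]; ring
      have hδσ0 : 0 < δ / σ := div_pos hδpos hσ
      have h1 : 0 < u - δ / σ := by linarith
      have hgx : h (m - δ) = gBUL k (u - δ / σ) := by rw [hgh, hux, abs_of_pos h1]
      have hlt := hA (mem_Ici.mpr h1.le) (mem_Ici.mpr hu.le) (by linarith)
      have hle := hb hdist
      rw [hgx, hgm] at hle
      linarith
    ext m
    simp only [Set.mem_setOf_eq, Set.mem_singleton_iff]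
    constructor
    · intro hm
      rcases lt_trichotomy ((m - μ) / σ) 0 with hu | hu | hu
      · exfalso
        have hm2 := hmax_refl m hm
        have e : (2 * μ - m - μ) / σ = -((m - μ) / σ) := by ring
        exact key2 (2 * μ - m) hm2 (by rw [e]; linarith)
      · rw [div_eq_zero_iff] at hu
        rcases hu with hu | hu
        · linarith
        · exact absurd hu hσ0
      · exact absurd hu (key2 m hm)
    · intro hmeq
      rw [hmeq]
      have : ∀ᶠ x in nhds μ, h x ≤ h μ := by
        apply Metric.eventually_nhds_iff.mpr ⟨1, one_pos, ?_⟩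
        intro x _
        rw [hgh, hgh]
        rw [show (μ - μ) / σ = 0 by ring, abs_zero]
        rcases eq_or_lt_of_le (abs_nonneg ((x - μ) / σ)) with h0 | h0
        · rw [← h0]
        · exact (hA (mem_Ici.mpr (le_refl _)) (mem_Ici.mpr (abs_nonneg _)) h0).le
      exact this
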